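/- For every integer n ≥ 1, M_n = U_n ∪ ⋃_{j ≥ n} ((β̄_j − n) + M_0), where U_n = {λ ∈ M_n : λ = Σ_{j=0}^{n−1} l_j β̄_j for some integers l_0, …, l_{n−1} ∈ ℤ} and (β̄_j − n) + M_0 = {β̄_j − n + μ : μ ∈ M_0}. -/

import Mathlib

open MvPolynomial

/-- `β̄_0 = 1`, `β̄_{i+1} = 2β̄_i + 1/2^{i+1}`, so `β̄_i = (2^{i+2} - 2^{-i})/3`. -/
noncomputable def betaSeq : ℕ → ℚ
  | 0 => 1
  | (i + 1) => 2 * betaSeq i + 1 / 2 ^ (i + 1)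

/-- The generating sequence `P_0 = x`, `P_1 = y`, `P_{i+1} = P_i² - x^{2^{i+1}}·P_{i-1}`. -/
noncomputable def Ppoly (K : Type) [Field K] : ℕ → MvPolynomial (Fin 2) K
  | 0 => X 0
  | 1 => X 1
  | (i + 2) => (Ppoly K (i + 1)) ^ 2 - (X 0) ^ (2 ^ (i + 2)) * Ppoly K i

/-- The rational function field `K(x,y)`. -/
abbrev Kxy (K : Type) [Field K] := FractionRing (MvPolynomial (Fin 2) K)

/-- `W_n = {a_0 + a_1·(y/x) + ⋯ + a_n·(y/x)^n ∣ a_0, …, a_n ∈ K[x,y]} ⊆ K(x,y)`. -/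
noncomputable def Wset (K : Type) [Field K] (n : ℕ) : Set (Kxy K) :=
  {g | ∃ a : Fin (n + 1) → MvPolynomial (Fin 2) K,
    g = ∑ j : Fin (n + 1), algebraMap (MvPolynomial (Fin 2) K) (Kxy K) (a j) *
      (algebraMap (MvPolynomial (Fin 2) K) (Kxy K) (X 1) /
        algebraMap (MvPolynomial (Fin 2) K) (Kxy K) (X 0)) ^ (j : ℕ)}

/-- `M_n = {ν̄(f) ∣ f ∈ W_n, f ≠ 0}` for a valuation `v` on `K(x,y)`. -/
def Mset (K : Type) [Field K] (v : Kxy K → ℚ) (n : ℕ) : Set ℚ :=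
  {q | ∃ g ∈ Wset K n, g ≠ 0 ∧ v g = q}

section MainAux

variable (K : Type) [Field K]

/-- generators of `(x,y)^n` as an ideal -/
noncomputable def MnGens (n : ℕ) : Fin (n + 1) → MvPolynomial (Fin 2) K :=
  fun k => X 0 ^ (n - (k : ℕ)) * X 1 ^ (k : ℕ)

noncomputable def MnIdeal (n : ℕ) : Ideal (MvPolynomial (Fin 2) K) :=
  Ideal.span (Set.range (MnGens K n))

lemma MnIdeal_succ_le (n : ℕ) : MnIdeal K (n + 1) ≤ MnIdeal K n := by
  rw [MnIdeal, Ideal.span_le]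
  rintro _ ⟨k, rfl⟩
  rcases Nat.lt_or_ge (k : ℕ) (n + 1) with hk | hk
  · have : MnGens K (n + 1) k = X 0 * MnGens K n ⟨(k : ℕ), hk⟩ := by
      simp only [MnGens]
      have : (n + 1) - (k : ℕ) = (n - (k : ℕ)) + 1 := by omega
      rw [this, pow_succ]
      ring
    rw [this]
    exact Ideal.mul_mem_left _ _ (Ideal.subset_span ⟨_, rfl⟩)
  · have hk' : (k : ℕ) = n + 1 := by omega
    have : MnGens K (n + 1) k = X 1 * MnGens K n ⟨n, Nat.lt_succ_self n⟩ := by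
      simp only [MnGens, hk']
      rw [Nat.sub_self, Nat.sub_self]
      rw [pow_succ]
      ring
    rw [this]
    exact Ideal.mul_mem_left _ _ (Ideal.subset_span ⟨_, rfl⟩)

lemma MnIdeal_le {n m : ℕ} (h : n ≤ m) : MnIdeal K m ≤ MnIdeal K n := by
  induction m with
  | zero => simp_all
  | succ m ih =>
    rcases Nat.lt_or_ge n (m + 1) with h' | h'
    · exact le_trans (MnIdeal_succ_le K m) (ih (by omega))
    · have : n = m + 1 := by omega
      subst this; exact le_rfl

lemma MnIdeal_mul_mem {n m : ℕ} {a b : MvPolynomial (Fin 2) K}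
    (ha : a ∈ MnIdeal K n) (hb : b ∈ MnIdeal K m) : a * b ∈ MnIdeal K (n + m) := by
  have : MnIdeal K n * MnIdeal K m ≤ MnIdeal K (n + m) := by
    rw [MnIdeal, MnIdeal, Ideal.span_mul_span', Ideal.span_le]
    rintro _ ⟨_, ⟨⟨k, rfl⟩, _, ⟨l, rfl⟩, rfl⟩⟩
    have hkl : (k : ℕ) + (l : ℕ) < n + m + 1 := by omega
    have : MnGens K n k * MnGens K m l = MnGens K (n + m) ⟨(k : ℕ) + (l : ℕ), hkl⟩ := by
      simp only [MnGens]
      have h1 : (n + m) - ((k : ℕ) + (l : ℕ)) = (n - (k : ℕ)) + (m - (l : ℕ)) := by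
        have := k.isLt; have := l.isLt; omega
      rw [h1, pow_add, pow_add]
      ring
    simp only [Set.mem_setOf_eq]
    rw [this]
    exact Ideal.subset_span ⟨_, rfl⟩
  exact this (Ideal.mul_mem_mul ha hb)

lemma X0_pow_mem (m : ℕ) : (X 0 : MvPolynomial (Fin 2) K) ^ m ∈ MnIdeal K m := by
  have : (X 0 : MvPolynomial (Fin 2) K) ^ m = MnGens K m ⟨0, Nat.succ_pos m⟩ := by
    simp [MnGens]
  rw [this]
  exact Ideal.subset_span ⟨_, rfl⟩

lemma Ppoly_mem : ∀ i : ℕ, Ppoly K i ∈ MnIdeal K i := by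
  have key : ∀ i : ℕ, Ppoly K i ∈ MnIdeal K i ∧ Ppoly K (i + 1) ∈ MnIdeal K (i + 1) := by
    intro i
    induction i with
    | zero =>
      constructor
      · have : (MnIdeal K 0) = ⊤ := by
          rw [eq_top_iff, ← Ideal.span_singleton_one, Ideal.span_le]
          rintro _ rfl
          have : (1 : MvPolynomial (Fin 2) K) = MnGens K 0 ⟨0, Nat.one_pos⟩ := by
            simp [MnGens]
          rw [this]; exact Ideal.subset_span ⟨_, rfl⟩
        rw [this]; trivial
      · have : Ppoly K 1 = MnGens K 1 ⟨1, Nat.one_lt_two⟩ := by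
          simp [Ppoly, MnGens]
        rw [this]; exact Ideal.subset_span ⟨_, rfl⟩
    | succ i ih =>
      refine ⟨ih.2, ?_⟩
      show Ppoly K (i + 2) ∈ MnIdeal K (i + 2)
      rw [show Ppoly K (i + 2) = (Ppoly K (i + 1)) ^ 2 - (X 0) ^ (2 ^ (i + 2)) * Ppoly K i
        from rfl]
      apply Ideal.sub_mem
      · have : (Ppoly K (i + 1)) ^ 2 ∈ MnIdeal K ((i + 1) + (i + 1)) := by
          rw [sq]; exact MnIdeal_mul_mem K ih.2 ih.2
        exact MnIdeal_le K (by omega) this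
      · have : (X 0 : MvPolynomial (Fin 2) K) ^ (2 ^ (i + 2)) * Ppoly K i ∈
            MnIdeal K (2 ^ (i + 2) + i) :=
          MnIdeal_mul_mem K (X0_pow_mem K _) ih.1
        refine MnIdeal_le K ?_ this
        have h2 : i + 4 ≤ 2 ^ (i + 2) := by
          clear this ih
          induction i with
          | zero => norm_num
          | succ i ih => rw [pow_succ]; omega
        omega
  exact fun i => (key i).1

lemma algMap_ne_zero {f : MvPolynomial (Fin 2) K} (hf : f ≠ 0) :
    algebraMap (MvPolynomial (Fin 2) K) (Kxy K) f ≠ 0 := by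
  intro h
  apply hf
  apply IsFractionRing.injective (MvPolynomial (Fin 2) K) (Kxy K)
  simpa using h

lemma X0_image_ne_zero : algebraMap (MvPolynomial (Fin 2) K) (Kxy K) (X 0) ≠ 0 :=
  algMap_ne_zero K (X_ne_zero (s := (0 : Fin 2)))

lemma ratio_pow (n j : ℕ) (hj : j ≤ n) :
    algebraMap (MvPolynomial (Fin 2) K) (Kxy K) (X 0) ^ n *
      (algebraMap (MvPolynomial (Fin 2) K) (Kxy K) (X 1) /
        algebraMap (MvPolynomial (Fin 2) K) (Kxy K) (X 0)) ^ j =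
    algebraMap (MvPolynomial (Fin 2) K) (Kxy K) (X 0 ^ (n - j) * X 1 ^ j) := by
  have hx := X0_image_ne_zero K
  rw [map_mul, map_pow, map_pow, div_pow]
  conv_lhs => rw [show n = (n - j) + j by omega]
  rw [pow_add]
  field_simp

lemma Ppoly_ne_zero : ∀ j : ℕ, Ppoly K j ≠ 0 := by
  set ψ : MvPolynomial (Fin 2) K →ₐ[K] Polynomial K :=
    aeval (fun i : Fin 2 => if i = 0 then (0 : Polynomial K) else Polynomial.X) with hψ
  have hx : ψ (X 0) = 0 := by simp [hψ]
  have hy : ψ (X 1) = Polynomial.X := by simp [hψ]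
  have key : ∀ i : ℕ, ψ (Ppoly K (i + 1)) = Polynomial.X ^ 2 ^ i ∧
      ψ (Ppoly K (i + 2)) = Polynomial.X ^ 2 ^ (i + 1) := by
    intro i
    induction i with
    | zero =>
      constructor
      · show ψ (X 1) = _; simpa using hy
      · show ψ ((Ppoly K 1) ^ 2 - (X 0) ^ (2 ^ 2) * Ppoly K 0) = _
        rw [map_sub, map_mul, map_pow, map_pow, hx]
        show (ψ (X 1)) ^ 2 - _ = _
        rw [hy]
        norm_num
    | succ i ih =>
      refine ⟨ih.2, ?_⟩
      show ψ ((Ppoly K (i + 2)) ^ 2 - (X 0) ^ (2 ^ (i + 3)) * Ppoly K (i + 1)) = _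
      rw [map_sub, map_mul, map_pow, map_pow, hx, ih.2, ih.1]
      rw [zero_pow (by positivity), zero_mul, sub_zero, ← pow_mul]
      ring_nf
  intro j
  match j with
  | 0 => exact (X_ne_zero (s := (0 : Fin 2)) : (X 0 : MvPolynomial (Fin 2) K) ≠ 0)
  | (j + 1) =>
    intro h
    have := (key j).1
    rw [h, map_zero] at this
    exact (pow_ne_zero _ Polynomial.X_ne_zero) this.symm

lemma mem_Wset_zero (g : Kxy K) :
    g ∈ Wset K 0 ↔ ∃ F : MvPolynomial (Fin 2) K,
      g = algebraMap (MvPolynomial (Fin 2) K) (Kxy K) F := by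
  constructor
  · rintro ⟨a, rfl⟩
    exact ⟨a 0, by simp⟩
  · rintro ⟨F, rfl⟩
    exact ⟨fun _ => F, by simp⟩

lemma mem_Wset_iff (n : ℕ) (g : Kxy K) :
    g ∈ Wset K n ↔ ∃ F : MvPolynomial (Fin 2) K, F ∈ MnIdeal K n ∧
      algebraMap (MvPolynomial (Fin 2) K) (Kxy K) (X 0) ^ n * g =
        algebraMap (MvPolynomial (Fin 2) K) (Kxy K) F := by
  constructor
  · rintro ⟨a, rfl⟩
    refine ⟨∑ j : Fin (n + 1), a j * MnGens K n j, ?_, ?_⟩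
    · exact Submodule.sum_mem _ fun j _ =>
        Ideal.mul_mem_left _ _ (Ideal.subset_span ⟨j, rfl⟩)
    · rw [Finset.mul_sum, map_sum]
      refine Finset.sum_congr rfl fun j _ => ?_
      rw [map_mul, mul_left_comm, ratio_pow K n j (by have := j.isLt; omega)]
      rfl
  · rintro ⟨F, hF, hFeq⟩
    obtain ⟨c, hc⟩ := Ideal.mem_span_range_iff_exists_fun.mp hF
    refine ⟨c, ?_⟩
    have hx : (algebraMap (MvPolynomial (Fin 2) K) (Kxy K) (X 0)) ^ n ≠ 0 :=
      pow_ne_zero _ (X0_image_ne_zero K)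
    apply mul_left_cancel₀ hx
    rw [hFeq, ← hc, map_sum, Finset.mul_sum]
    refine Finset.sum_congr rfl fun j _ => ?_
    rw [map_mul, mul_left_comm, ratio_pow K n j (by have := j.isLt; omega)]
    rfl

end MainAux

/-- For every `n ≥ 1`, `M_n = U_n ∪ ⋃_{j ≥ n} ((β̄_j - n) + M_0)`, where `U_n` consists of
the elements of `M_n` which are `ℤ`-linear combinations of `β̄_0, …, β̄_{n-1}`. -/
theorem Mn_decomposition
    (K : Type) [Field K] [IsAlgClosed K]
    (v : Kxy K → ℚ)
    (hmul : ∀ g h : Kxy K, g ≠ 0 → h ≠ 0 → v (g * h) = v g + v h)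
    (hadd : ∀ g h : Kxy K, g ≠ 0 → h ≠ 0 → g + h ≠ 0 → min (v g) (v h) ≤ v (g + h))
    (hnonneg : ∀ f : MvPolynomial (Fin 2) K, f ≠ 0 →
      0 ≤ v (algebraMap (MvPolynomial (Fin 2) K) (Kxy K) f))
    (hpos : ∀ f : MvPolynomial (Fin 2) K, f ≠ 0 → f ∈ Ideal.span {X 0, X 1} →
      0 < v (algebraMap (MvPolynomial (Fin 2) K) (Kxy K) f))
    (hβ : ∀ i : ℕ, v (algebraMap (MvPolynomial (Fin 2) K) (Kxy K) (Ppoly K i)) = betaSeq i)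
    (hM0 : Mset K v 0 = {q : ℚ | ∃ l : ℕ →₀ ℕ, q = l.sum fun i k => (k : ℚ) * betaSeq i}) :
    ∀ n : ℕ, 1 ≤ n →
      Mset K v n =
        {q ∈ Mset K v n | ∃ l : Fin n → ℤ, q = ∑ j : Fin n, (l j : ℚ) * betaSeq (j : ℕ)} ∪
          ⋃ j : ℕ, ⋃ (_ : n ≤ j), (fun μ => betaSeq j - (n : ℚ) + μ) '' Mset K v 0 := by
  intro n hn
  have hx0 : algebraMap (MvPolynomial (Fin 2) K) (Kxy K) (X 0) ≠ 0 := X0_image_ne_zero K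
  have hv1 : v 1 = 0 := by
    have := hmul 1 1 one_ne_zero one_ne_zero
    rw [mul_one] at this
    linarith
  have hvx : v (algebraMap (MvPolynomial (Fin 2) K) (Kxy K) (X 0)) = 1 := by
    have := hβ 0
    simpa [Ppoly, betaSeq] using this
  have hvxpow : ∀ m : ℕ, v (algebraMap (MvPolynomial (Fin 2) K) (Kxy K) (X 0) ^ m) = m := by
    intro m
    induction m with
    | zero => simpa using hv1
    | succ m ih =>
      rw [pow_succ, hmul _ _ (pow_ne_zero _ hx0) hx0, ih, hvx]
      push_cast; ring
  ext q
  simp only [Set.mem_union, Set.mem_setOf_eq, Set.mem_iUnion, Set.mem_image]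
  constructor
  · rintro ⟨g, hgW, hg0, rfl⟩
    obtain ⟨F, hFmem, hFeq⟩ := (mem_Wset_iff K n g).1 hgW
    have hF0 : F ≠ 0 := by
      rintro rfl
      rw [map_zero, mul_eq_zero] at hFeq
      rcases hFeq with h | h
      · exact pow_ne_zero _ hx0 h
      · exact hg0 h
    have hφF : algebraMap (MvPolynomial (Fin 2) K) (Kxy K) F ≠ 0 := algMap_ne_zero K hF0
    have hvF : v (algebraMap (MvPolynomial (Fin 2) K) (Kxy K) F) = n + v g := by
      rw [← hFeq, hmul _ _ (pow_ne_zero _ hx0) hg0, hvxpow]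
    have hFM0 : v (algebraMap (MvPolynomial (Fin 2) K) (Kxy K) F) ∈ Mset K v 0 :=
      ⟨_, (mem_Wset_zero K _).2 ⟨F, rfl⟩, hφF, rfl⟩
    rw [hM0] at hFM0
    obtain ⟨l, hl⟩ := hFM0
    by_cases hcase : ∀ i ∈ l.support, i < n
    · left
      haveI : NeZero n := ⟨by omega⟩
      refine ⟨⟨g, hgW, hg0, rfl⟩,
        fun j => (l (j : ℕ) : ℤ) - (if j = 0 then (n : ℤ) else 0), ?_⟩
      have hnq : (n : ℚ) + v g = ∑ j : Fin n, (l (j : ℕ) : ℚ) * betaSeq (j : ℕ) := by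
        rw [← hvF, hl,
          Finsupp.sum_of_support_subset l
            (fun i hi => Finset.mem_range.2 (hcase i hi)) _ (fun i _ => by simp),
          ← Fin.sum_univ_eq_sum_range (fun i => (l i : ℚ) * betaSeq i) n]
      have key : ∑ j : Fin n,
          ((((l (j : ℕ) : ℤ) - (if j = 0 then (n : ℤ) else 0)) : ℤ) : ℚ) * betaSeq (j : ℕ)
          = (∑ j : Fin n, (l (j : ℕ) : ℚ) * betaSeq (j : ℕ)) - n := by
        have hterm : ∀ j : Fin n,
            ((((l (j : ℕ) : ℤ) - (if j = 0 then (n : ℤ) else 0)) : ℤ) : ℚ) * betaSeq (j : ℕ)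
            = (l (j : ℕ) : ℚ) * betaSeq (j : ℕ)
              - (if j = 0 then (n : ℚ) * betaSeq (j : ℕ) else 0) := by
          intro j
          split_ifs with h <;> push_cast <;> ring
        rw [Finset.sum_congr rfl (fun j _ => hterm j), Finset.sum_sub_distrib]
        have : ∑ j : Fin n, (if j = 0 then (n : ℚ) * betaSeq (j : ℕ) else 0)
            = (n : ℚ) * betaSeq ((0 : Fin n) : ℕ) := by
          rw [Finset.sum_ite_eq' Finset.univ (0 : Fin n)
            (fun j => (n : ℚ) * betaSeq (j : ℕ))]
          simp
        rw [this]
        have h0 : ((0 : Fin n) : ℕ) = 0 := rfl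
        rw [h0, show betaSeq 0 = 1 from rfl, mul_one]
      rw [key, ← hnq]
      ring
    · right
      push_neg at hcase
      obtain ⟨j, hjsup, hjn⟩ := hcase
      have hlj : l j ≠ 0 := Finsupp.mem_support_iff.1 hjsup
      set l' : ℕ →₀ ℕ := l.update j (l j - 1) with hl'
      have hdec : l = l' + Finsupp.single j 1 := by
        ext i
        rcases eq_or_ne i j with rfl | hij
        · simp [hl', Finsupp.single_eq_same]
          omega
        · simp [hl', Finsupp.single_apply, (Ne.symm hij), Function.update_of_ne hij]
      have hsum2 : (l.sum fun i k => (k : ℚ) * betaSeq i)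
          = (l'.sum fun i k => (k : ℚ) * betaSeq i) + betaSeq j := by
        conv_lhs => rw [hdec]
        rw [Finsupp.sum_add_index' (fun a => by simp) (fun a b1 b2 => by push_cast; ring)]
        rw [Finsupp.sum_single_index (by simp)]
        push_cast
        ring
      refine ⟨j, hjn, l'.sum fun i k => (k : ℚ) * betaSeq i, ?_, ?_⟩
      · rw [hM0]; exact ⟨l', rfl⟩
      · have : (n : ℚ) + v g = (l'.sum fun i k => (k : ℚ) * betaSeq i) + betaSeq j := by
          rw [← hvF, hl, hsum2]
        linarith
  · rintro (⟨hqM, -⟩ | ⟨j, hjn, μ, hμ, rfl⟩)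
    · exact hqM
    · obtain ⟨g0, hg0W, hg00, hvμ⟩ := hμ
      obtain ⟨G, rfl⟩ := (mem_Wset_zero K g0).1 hg0W
      have hG0 : G ≠ 0 := by
        rintro rfl
        exact hg00 (map_zero _)
      have hP0 : Ppoly K j ≠ 0 := Ppoly_ne_zero K j
      have hPG0 : Ppoly K j * G ≠ 0 := mul_ne_zero hP0 hG0
      have hPGmem : Ppoly K j * G ∈ MnIdeal K n :=
        Ideal.mul_mem_right G _ (MnIdeal_le K hjn (Ppoly_mem K j))
      set g : Kxy K := algebraMap (MvPolynomial (Fin 2) K) (Kxy K) (Ppoly K j * G) /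
        (algebraMap (MvPolynomial (Fin 2) K) (Kxy K) (X 0)) ^ n with hg
      have hgeq : algebraMap (MvPolynomial (Fin 2) K) (Kxy K) (X 0) ^ n * g =
          algebraMap (MvPolynomial (Fin 2) K) (Kxy K) (Ppoly K j * G) := by
        rw [hg, mul_div_cancel₀ _ (pow_ne_zero _ hx0)]
      have hgW : g ∈ Wset K n := (mem_Wset_iff K n g).2 ⟨_, hPGmem, hgeq⟩
      have hgne : g ≠ 0 := by
        intro h
        rw [h, mul_zero] at hgeq
        exact algMap_ne_zero K hPG0 hgeq.symm
      refine ⟨g, hgW, hgne, ?_⟩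
      have h1 : v (algebraMap (MvPolynomial (Fin 2) K) (Kxy K) (Ppoly K j * G)) =
          n + v g := by
        rw [← hgeq, hmul _ _ (pow_ne_zero _ hx0) hgne, hvxpow]
      have h2 : v (algebraMap (MvPolynomial (Fin 2) K) (Kxy K) (Ppoly K j * G)) =
          betaSeq j + μ := by
        rw [map_mul, hmul _ _ (algMap_ne_zero K hP0) (algMap_ne_zero K hG0), hβ j, hvμ]
      linarith
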